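/- arXiv:1701.07430 — 4 statements merged into one kernel-verified Lean document; each statement's English description precedes it below -/
import Mathlib

section
/- Let n ≥ 5 and let C = (c_{ij}) be an n×n matrix over K with every entry nonzero. If Π_{i=1}^n c_{i,w(i)} = 1 for every even permutation w ∈ A_n, then c_{ij} = c_{i1}·c_{1j}/c_{11} for all 1 ≤ i, j ≤ n; in particular rank(C) = 1. -/
open Matrix Finset

/-- for `n ≥ 5`, if all entries of `C` are nonzero and
`Π_i c_{i,w(i)} = 1` for every even permutation `w ∈ A_n`, then
`c_{ij} = c_{i1}·c_{1j}/c_{11}` for all `i, j`; in particular `rank C = 1`. -/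
theorem rank_one_of_all_even_perm_products_one {K : Type*} [Field K] [CharZero K]
    {n : ℕ} (hn : 5 ≤ n) (C : Matrix (Fin n) (Fin n) K)
    (hC : ∀ i j : Fin n, C i j ≠ 0)
    (h : ∀ w : Equiv.Perm (Fin n), Equiv.Perm.sign w = 1 → ∏ i, C i (w i) = 1) :
    (∀ i j : Fin n, C i j = C i ⟨0, by omega⟩ * C ⟨0, by omega⟩ j / C ⟨0, by omega⟩ ⟨0, by omega⟩) ∧
      C.rank = 1 := by
  have hid : ∏ i, C i i = 1 := by simpa using h 1 (by simp)
  have key : ∀ σ : Equiv.Perm (Fin n), Equiv.Perm.sign σ = 1 →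
      ∀ s : Finset (Fin n), (∀ x, x ∉ s → σ x = x) →
      ∏ i ∈ s, (C i (σ i) / C i i) = 1 := by
    intro σ hσ s hs
    have h1 : ∏ i, (C i (σ i) / C i i) = 1 := by
      rw [Finset.prod_div_distrib, h σ hσ, hid, div_one]
    rw [← h1]
    apply Finset.prod_subset (Finset.subset_univ s)
    intro x _ hx
    rw [hs x hx, div_self (hC x x)]
  -- the 3-cycle relation
  have R3 : ∀ p q r : Fin n, p ≠ q → q ≠ r → p ≠ r →
      C p q * C q r * C r p = C p p * C q q * C r r := by
    intro p q r hpq hqr hpr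
    set σ := Equiv.swap p q * Equiv.swap q r with hσdef
    have hsp : σ p = q := by
      simp [hσdef, Equiv.swap_apply_of_ne_of_ne hpq hpr]
    have hsq : σ q = r := by
      simp [hσdef, Equiv.swap_apply_of_ne_of_ne (Ne.symm hpr) (Ne.symm hqr)]
    have hsr : σ r = p := by
      simp [hσdef]
    have hsign : Equiv.Perm.sign σ = 1 := by
      rw [hσdef, Equiv.Perm.sign_mul, Equiv.Perm.sign_swap hpq, Equiv.Perm.sign_swap hqr]
      norm_num
    have hfix : ∀ x, x ∉ ({p, q, r} : Finset (Fin n)) → σ x = x := by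
      intro x hx
      simp only [Finset.mem_insert, Finset.mem_singleton, not_or] at hx
      obtain ⟨h1, h2, h3⟩ := hx
      simp [hσdef, Equiv.swap_apply_of_ne_of_ne h2 h3,
        Equiv.swap_apply_of_ne_of_ne h1 h2]
    have hprod := key σ hsign {p, q, r} hfix
    rw [Finset.prod_insert (by simp [hpq, hpr]), Finset.prod_pair hqr, hsp, hsq, hsr] at hprod
    rw [div_mul_div_comm, div_mul_div_comm,
      div_eq_one_iff_eq (by simp [hC p p, hC q q, hC r r])] at hprod
    linear_combination hprod
  -- the product-of-two-transpositions relation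
  have R2 : ∀ p q r s : Fin n, p ≠ q → p ≠ r → p ≠ s → q ≠ r → q ≠ s → r ≠ s →
      C p q * C q p * C r s * C s r = C p p * C q q * C r r * C s s := by
    intro p q r s hpq hpr hps hqr hqs hrs
    set σ := Equiv.swap p q * Equiv.swap r s with hσdef
    have hsp : σ p = q := by
      simp [hσdef, Equiv.swap_apply_of_ne_of_ne hpr hps]
    have hsq : σ q = p := by
      simp [hσdef, Equiv.swap_apply_of_ne_of_ne hqr hqs]
    have hsr : σ r = s := by
      simp [hσdef, Equiv.swap_apply_of_ne_of_ne (Ne.symm hps) (Ne.symm hqs)]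
    have hss : σ s = r := by
      simp [hσdef, Equiv.swap_apply_of_ne_of_ne (Ne.symm hpr) (Ne.symm hqr)]
    have hsign : Equiv.Perm.sign σ = 1 := by
      rw [hσdef, Equiv.Perm.sign_mul, Equiv.Perm.sign_swap hpq, Equiv.Perm.sign_swap hrs]
      norm_num
    have hfix : ∀ x, x ∉ ({p, q, r, s} : Finset (Fin n)) → σ x = x := by
      intro x hx
      simp only [Finset.mem_insert, Finset.mem_singleton, not_or] at hx
      obtain ⟨h1, h2, h3, h4⟩ := hx
      simp [hσdef, Equiv.swap_apply_of_ne_of_ne h3 h4,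
        Equiv.swap_apply_of_ne_of_ne h1 h2]
    have hprod := key σ hsign {p, q, r, s} hfix
    rw [Finset.prod_insert (by simp [hpq, hpr, hps]),
      Finset.prod_insert (by simp [hqr, hqs]), Finset.prod_pair hrs,
      hsp, hsq, hsr, hss] at hprod
    rw [div_mul_div_comm, div_mul_div_comm, div_mul_div_comm,
      div_eq_one_iff_eq (by simp [hC p p, hC q q, hC r r, hC s s])] at hprod
    linear_combination hprod
  set z : Fin n := ⟨0, by omega⟩ with hzdef
  -- T relation
  have T : ∀ a b c : Fin n, a ≠ z → b ≠ z → c ≠ z → a ≠ b → b ≠ c → a ≠ c →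
      C z z ^ 3 * (C a a * C b b * C c c) =
        (C z a * C a z) * (C z b * C b z) * (C z c * C c z) := by
    intro a b c haz hbz hcz hab hbc hac
    have H0 := R3 a b c hab hbc hac
    have Hab := R3 z a b (Ne.symm haz) hab (Ne.symm hbz)
    have Hbc := R3 z b c (Ne.symm hbz) hbc (Ne.symm hcz)
    have Hca := R3 z c a (Ne.symm hcz) (Ne.symm hac) (Ne.symm haz)
    have m1 : (C z a * C a b * C b z) * ((C z b * C b c * C c z) * (C z c * C c a * C a z)) =
        (C z z * C a a * C b b) * ((C z z * C b b * C c c) * (C z z * C c c * C a a)) := by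
      rw [Hab, Hbc, Hca]
    have h9 : (C a a * C b b * C c c) * (C z z ^ 3 * (C a a * C b b * C c c)) =
        (C a a * C b b * C c c) *
          ((C z a * C a z) * (C z b * C b z) * (C z c * C c z)) := by
      linear_combination (C z a * C a z * C z b * C b z * C z c * C c z) * H0 - m1
    exact mul_left_cancel₀
      (mul_ne_zero (mul_ne_zero (hC a a) (hC b b)) (hC c c)) h9
  -- S relation
  have S : ∀ a b c : Fin n, a ≠ z → b ≠ z → c ≠ z → a ≠ b → b ≠ c → a ≠ c →
      (C z a * C a z) * C z z * (C b b * C c c) =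
        C a a * ((C z b * C b z) * (C z c * C c z)) := by
    intro a b c haz hbz hcz hab hbc hac
    have H2 := R2 z a b c (Ne.symm haz) (Ne.symm hbz) (Ne.symm hcz) hab hac hbc
    have Hbc := R3 z b c (Ne.symm hbz) hbc (Ne.symm hcz)
    have Hcb := R3 z c b (Ne.symm hcz) (Ne.symm hbc) (Ne.symm hbz)
    have m1 : (C z a * C a z) * ((C z b * C b c * C c z) * (C z c * C c b * C b z)) =
        (C z b * C b z) * ((C z c * C c z) * (C z z * C a a * (C b b * C c c))) := by
      linear_combination (C z b * C c z * C z c * C b z) * H2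
    rw [Hbc, Hcb] at m1
    have h9 : ((C z a * C a z) * C z z * (C b b * C c c)) * (C z z * (C b b * C c c)) =
        (C a a * ((C z b * C b z) * (C z c * C c z))) * (C z z * (C b b * C c c)) := by
      linear_combination m1
    exact mul_right_cancel₀
      (mul_ne_zero (hC z z) (mul_ne_zero (hC b b) (hC c c))) h9
  -- choosing spare indices
  have pick : ∀ s : Finset (Fin n), s.card ≤ 4 → ∃ x, x ∉ s := by
    intro s hs
    by_contra hcon
    push_neg at hcon
    have : (univ : Finset (Fin n)).card ≤ s.card :=
      Finset.card_le_card (fun x _ => hcon x)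
    simp [Finset.card_univ] at this
    omega
  have card4 : ∀ a b c d : Fin n, ({a, b, c, d} : Finset (Fin n)).card ≤ 4 := by
    intro a b c d
    have h1 := Finset.card_insert_le a ({b, c, d} : Finset (Fin n))
    have h2 := Finset.card_insert_le b ({c, d} : Finset (Fin n))
    have h3 := Finset.card_insert_le c ({d} : Finset (Fin n))
    have h4 : ({d} : Finset (Fin n)).card = 1 := Finset.card_singleton d
    omega
  -- the diagonal identity
  have hdiag : ∀ i : Fin n, i ≠ z → C z i * C i z = C z z * C i i := by
    intro i hiz
    obtain ⟨j, hj⟩ := pick {z, i, i, i} (card4 z i i i)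
    obtain ⟨k, hk⟩ := pick {z, i, j, j} (card4 z i j j)
    obtain ⟨l, hl⟩ := pick {z, i, j, k} (card4 z i j k)
    simp only [Finset.mem_insert, Finset.mem_singleton, not_or] at hj hk hl
    obtain ⟨hjz, hji, -⟩ := hj
    obtain ⟨hkz, hki, hkj, -⟩ := hk
    obtain ⟨hlz, hli, hlj, hlk⟩ := hl
    have hT1 := T i j k hiz hjz hkz (Ne.symm hji) (Ne.symm hkj) (Ne.symm hki)
    have hT2 := T i j l hiz hjz hlz (Ne.symm hji) (Ne.symm hlj) (Ne.symm hli)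
    have hT3 := T i k l hiz hkz hlz (Ne.symm hki) (Ne.symm hlk) (Ne.symm hli)
    have hS1 := S j k l hjz hkz hlz (Ne.symm hkj) (Ne.symm hlk) (Ne.symm hlj)
    have hS2 := S i k l hiz hkz hlz (Ne.symm hki) (Ne.symm hlk) (Ne.symm hli)
    -- step1 : Pj * Ql = Pl * Qj
    have step1 : (C z j * C j z) * C l l = (C z l * C l z) * C j j := by
      have h9 : ((C z i * C i z) * (C z k * C k z)) * ((C z j * C j z) * C l l) =
          ((C z i * C i z) * (C z k * C k z)) * ((C z l * C l z) * C j j) := by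
        linear_combination C j j * hT3 - C l l * hT1
      exact mul_left_cancel₀
        (mul_ne_zero (mul_ne_zero (hC z i) (hC i z)) (mul_ne_zero (hC z k) (hC k z))) h9
    -- step1b : Pk * Ql = Pl * Qk
    have step1b : (C z k * C k z) * C l l = (C z l * C l z) * C k k := by
      have h9 : ((C z i * C i z) * (C z j * C j z)) * ((C z k * C k z) * C l l) =
          ((C z i * C i z) * (C z j * C j z)) * ((C z l * C l z) * C k k) := by
        linear_combination C k k * hT2 - C l l * hT1
      exact mul_left_cancel₀
        (mul_ne_zero (mul_ne_zero (hC z i) (hC i z)) (mul_ne_zero (hC z j) (hC j z))) h9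
    -- step2 : Pk = w * Qk
    have step2 : C z k * C k z = C z z * C k k := by
      have h9 : (C j j * (C z l * C l z) * C l l) * (C z k * C k z) =
          (C j j * (C z l * C l z) * C l l) * (C z z * C k k) := by
        linear_combination - C l l * hS1 + C z z * C k k * C l l * step1
      exact mul_left_cancel₀
        (mul_ne_zero (mul_ne_zero (hC j j) (mul_ne_zero (hC z l) (hC l z))) (hC l l)) h9
    -- step3 : Pl = w * Ql
    have step3 : C z l * C l z = C z z * C l l := by
      have h9 : (C k k) * (C z l * C l z) = (C k k) * (C z z * C l l) := by
        linear_combination - step1b + C l l * step2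
      exact mul_left_cancel₀ (hC k k) h9
    -- step4 : Pi = w * Qi
    have h9 : (C z i * C i z) * (C z z * (C k k * C l l)) =
        (C z z * C i i) * (C z z * (C k k * C l l)) := by
      linear_combination hS2 + C i i * (C z l * C l z) * step2 + C i i * C z z * C k k * step3
    exact mul_right_cancel₀
      (mul_ne_zero (hC z z) (mul_ne_zero (hC k k) (hC l l))) h9
  -- the entry identity
  have main : ∀ i j : Fin n, C i j = C i z * C z j / C z z := by
    intro i j
    rw [eq_div_iff (hC z z)]
    by_cases hiz : i = z
    · subst hiz
      by_cases hjz : j = z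
      · subst hjz; ring
      · ring
    · by_cases hjz : j = z
      · subst hjz; ring
      · by_cases hij : i = j
        · subst hij
          linear_combination - hdiag i hiz
        · have H := R3 z i j (Ne.symm hiz) hij (Ne.symm hjz)
          have h9 : (C z i * C j z) * (C i j * C z z) =
              (C z i * C j z) * (C i z * C z j) := by
            linear_combination C z z * H - C z z * C j j * hdiag i hiz -
              C i z * C z i * hdiag j hjz
          exact mul_left_cancel₀ (mul_ne_zero (hC z i) (hC j z)) h9
  constructor
  · exact main
  · -- rank
    rw [Matrix.rank_eq_finrank_span_cols]
    have hspan : Submodule.span K (Set.range Cᵀ) = Submodule.span K {Cᵀ z} := by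
      apply le_antisymm
      · rw [Submodule.span_le]
        rintro _ ⟨j, rfl⟩
        have hcol : Cᵀ j = (C z j / C z z) • Cᵀ z := by
          funext i
          simp only [Matrix.transpose_apply, Pi.smul_apply, smul_eq_mul]
          rw [main i j]
          ring
        rw [hcol]
        exact Submodule.smul_mem _ _ (Submodule.subset_span rfl)
      · exact Submodule.span_mono (by rintro _ rfl; exact ⟨z, rfl⟩)
    change Module.finrank K ↥(Submodule.span K (Set.range Cᵀ)) = 1
    rw [hspan]
    have hne : Cᵀ z ≠ 0 := by
      intro hh
      exact hC z z (by simpa using congrFun hh z)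
    exact finrank_span_singleton hne
end

section
/- Let C = (c_{ij}) be a 4×4 matrix over K with every entry nonzero. Then Π_{i=1}^4 c_{i,w(i)} = 1 for every even permutation w ∈ A_4 if and only if there exist signs ε_u, ε_v ∈ {+1, −1} and nonzero scalars a_{11}, a_{12}, a_{13}, a_{14}, a_{21}, a_{31}, a_{41} ∈ K with a_{11}·a_{12}·a_{13}·a_{14}·a_{11}·a_{21}·a_{31}·a_{41} = a_{11}⁴ such that c_{ij} = s_{ij}·a_{i1}·a_{1j}/a_{11} for all i, j, where the sign matrix S = (s_{ij}) is [[1,1,1,1],[1,ε_u,ε_v,ε_uε_v],[1,ε_v,ε_uε_v,ε_u],[1,ε_uε_v,ε_u,ε_v]]. -/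
open Matrix Finset

private lemma signProdZ1 : ∀ w : Equiv.Perm (Fin 4), Equiv.Perm.sign w = 1 →
    ∏ i, (!![1,1,1,1;1,1,1,1;1,1,1,1;1,1,1,1] : Matrix (Fin 4) (Fin 4) ℤ) i (w i) = 1 := by decide
private lemma signProdZ2 : ∀ w : Equiv.Perm (Fin 4), Equiv.Perm.sign w = 1 →
    ∏ i, (!![1,1,1,1;1,1,-1,-1;1,-1,-1,1;1,-1,1,-1] : Matrix (Fin 4) (Fin 4) ℤ) i (w i) = 1 := by decide
private lemma signProdZ3 : ∀ w : Equiv.Perm (Fin 4), Equiv.Perm.sign w = 1 →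
    ∏ i, (!![1,1,1,1;1,-1,1,-1;1,1,-1,-1;1,-1,-1,1] : Matrix (Fin 4) (Fin 4) ℤ) i (w i) = 1 := by decide
private lemma signProdZ4 : ∀ w : Equiv.Perm (Fin 4), Equiv.Perm.sign w = 1 →
    ∏ i, (!![1,1,1,1;1,-1,-1,1;1,-1,1,-1;1,1,-1,-1] : Matrix (Fin 4) (Fin 4) ℤ) i (w i) = 1 := by decide

set_option maxHeartbeats 2000000 in
/-- characterization of `4 × 4` matrices with all entries nonzero such that
`Π_i c_{i,w(i)} = 1` for every even permutation `w ∈ A_4`. -/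
theorem even_perm_products_one_iff_four {K : Type*} [Field K] [CharZero K]
    (C : Matrix (Fin 4) (Fin 4) K) (hC : ∀ i j : Fin 4, C i j ≠ 0) :
    (∀ w : Equiv.Perm (Fin 4), Equiv.Perm.sign w = 1 → ∏ i, C i (w i) = 1) ↔
      ∃ εu εv a₁₁ a₁₂ a₁₃ a₁₄ a₂₁ a₃₁ a₄₁ : K,
        (εu = 1 ∨ εu = -1) ∧ (εv = 1 ∨ εv = -1) ∧
        a₁₁ ≠ 0 ∧ a₁₂ ≠ 0 ∧ a₁₃ ≠ 0 ∧ a₁₄ ≠ 0 ∧ a₂₁ ≠ 0 ∧ a₃₁ ≠ 0 ∧ a₄₁ ≠ 0 ∧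
        a₁₁ * a₁₂ * a₁₃ * a₁₄ * a₁₁ * a₂₁ * a₃₁ * a₄₁ = a₁₁ ^ 4 ∧
        ∀ i j : Fin 4,
          C i j =
            (!![1, 1, 1, 1;
                1, εu, εv, εu * εv;
                1, εv, εu * εv, εu;
                1, εu * εv, εu, εv] : Matrix (Fin 4) (Fin 4) K) i j *
              (![a₁₁, a₂₁, a₃₁, a₄₁] i) * (![a₁₁, a₁₂, a₁₃, a₁₄] j) / a₁₁ := by
  constructor
  · intro hpw
    have E0 := hpw ⟨![0,1,2,3], ![0,1,2,3], by decide, by decide⟩ (by decide)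
    simp only [Fin.prod_univ_four, Equiv.coe_fn_mk, Matrix.cons_val_zero, Matrix.cons_val_one, Matrix.head_cons, Matrix.cons_val_two, Matrix.tail_cons, Matrix.cons_val_three] at E0
    have E1 := hpw ⟨![1,0,3,2], ![1,0,3,2], by decide, by decide⟩ (by decide)
    simp only [Fin.prod_univ_four, Equiv.coe_fn_mk, Matrix.cons_val_zero, Matrix.cons_val_one, Matrix.head_cons, Matrix.cons_val_two, Matrix.tail_cons, Matrix.cons_val_three] at E1
    have E2 := hpw ⟨![2,3,0,1], ![2,3,0,1], by decide, by decide⟩ (by decide)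
    simp only [Fin.prod_univ_four, Equiv.coe_fn_mk, Matrix.cons_val_zero, Matrix.cons_val_one, Matrix.head_cons, Matrix.cons_val_two, Matrix.tail_cons, Matrix.cons_val_three] at E2
    have E3 := hpw ⟨![3,2,1,0], ![3,2,1,0], by decide, by decide⟩ (by decide)
    simp only [Fin.prod_univ_four, Equiv.coe_fn_mk, Matrix.cons_val_zero, Matrix.cons_val_one, Matrix.head_cons, Matrix.cons_val_two, Matrix.tail_cons, Matrix.cons_val_three] at E3
    have E4 := hpw ⟨![1,2,0,3], ![2,0,1,3], by decide, by decide⟩ (by decide)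
    simp only [Fin.prod_univ_four, Equiv.coe_fn_mk, Matrix.cons_val_zero, Matrix.cons_val_one, Matrix.head_cons, Matrix.cons_val_two, Matrix.tail_cons, Matrix.cons_val_three] at E4
    have E5 := hpw ⟨![2,0,1,3], ![1,2,0,3], by decide, by decide⟩ (by decide)
    simp only [Fin.prod_univ_four, Equiv.coe_fn_mk, Matrix.cons_val_zero, Matrix.cons_val_one, Matrix.head_cons, Matrix.cons_val_two, Matrix.tail_cons, Matrix.cons_val_three] at E5
    have E6 := hpw ⟨![1,3,2,0], ![3,0,2,1], by decide, by decide⟩ (by decide)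
    simp only [Fin.prod_univ_four, Equiv.coe_fn_mk, Matrix.cons_val_zero, Matrix.cons_val_one, Matrix.head_cons, Matrix.cons_val_two, Matrix.tail_cons, Matrix.cons_val_three] at E6
    have E7 := hpw ⟨![3,0,2,1], ![1,3,2,0], by decide, by decide⟩ (by decide)
    simp only [Fin.prod_univ_four, Equiv.coe_fn_mk, Matrix.cons_val_zero, Matrix.cons_val_one, Matrix.head_cons, Matrix.cons_val_two, Matrix.tail_cons, Matrix.cons_val_three] at E7
    have E8 := hpw ⟨![2,1,3,0], ![3,1,0,2], by decide, by decide⟩ (by decide)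
    simp only [Fin.prod_univ_four, Equiv.coe_fn_mk, Matrix.cons_val_zero, Matrix.cons_val_one, Matrix.head_cons, Matrix.cons_val_two, Matrix.tail_cons, Matrix.cons_val_three] at E8
    have E9 := hpw ⟨![3,1,0,2], ![2,1,3,0], by decide, by decide⟩ (by decide)
    simp only [Fin.prod_univ_four, Equiv.coe_fn_mk, Matrix.cons_val_zero, Matrix.cons_val_one, Matrix.head_cons, Matrix.cons_val_two, Matrix.tail_cons, Matrix.cons_val_three] at E9
    have E10 := hpw ⟨![0,2,3,1], ![0,3,1,2], by decide, by decide⟩ (by decide)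
    simp only [Fin.prod_univ_four, Equiv.coe_fn_mk, Matrix.cons_val_zero, Matrix.cons_val_one, Matrix.head_cons, Matrix.cons_val_two, Matrix.tail_cons, Matrix.cons_val_three] at E10
    have E11 := hpw ⟨![0,3,1,2], ![0,2,3,1], by decide, by decide⟩ (by decide)
    simp only [Fin.prod_univ_four, Equiv.coe_fn_mk, Matrix.cons_val_zero, Matrix.cons_val_one, Matrix.head_cons, Matrix.cons_val_two, Matrix.tail_cons, Matrix.cons_val_three] at E11

    have Q1 : C 0 2 * C 1 1 * C 3 0 = C 0 1 * C 1 0 * C 3 2 :=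
      mul_right_cancel₀ (hC 2 3) (by linear_combination E8 - E1)
    have Q2 : C 0 1 * C 1 2 * C 2 0 = C 0 2 * C 1 0 * C 2 1 :=
      mul_right_cancel₀ (hC 3 3) (by linear_combination E4 - E5)
    have Q3 : C 0 1 * C 1 3 * C 3 0 = C 0 3 * C 1 0 * C 3 1 :=
      mul_right_cancel₀ (hC 2 2) (by linear_combination E6 - E7)
    have Q4 : C 0 2 * C 2 3 * C 3 0 = C 0 3 * C 2 0 * C 3 2 :=
      mul_right_cancel₀ (hC 1 1) (by linear_combination E8 - E9)
    have Q5 : C 0 1 * C 2 0 * C 3 3 = C 0 3 * C 2 1 * C 3 0 :=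
      mul_right_cancel₀ (hC 1 2) (by linear_combination E4 - E3)
    have Q6 : C 0 1 * C 3 0 * C 2 2 = C 0 2 * C 2 0 * C 3 1 :=
      mul_right_cancel₀ (hC 1 3) (by linear_combination E6 - E2)
    have Q7 : C 0 0 * C 1 2 * C 2 3 = C 0 2 * C 1 3 * C 2 0 :=
      mul_right_cancel₀ (hC 3 1) (by linear_combination E10 - E2)
    have P4 : C 1 1 * C 2 0 * C 0 3 = C 2 3 * C 1 0 * C 0 1 :=
      mul_right_cancel₀ (mul_ne_zero (hC 3 0) (hC 0 2))
        (by linear_combination C 2 0 * C 0 3 * Q1 - C 0 1 * C 1 0 * Q4)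
    have P5 : C 3 3 * C 1 0 * C 0 2 = C 1 2 * C 3 0 * C 0 3 :=
      mul_right_cancel₀ (mul_ne_zero (hC 0 1) (hC 2 0))
        (by linear_combination C 1 0 * C 0 2 * Q5 - C 0 3 * C 3 0 * Q2)
    have P6 : C 2 2 * C 1 0 * C 0 3 = C 1 3 * C 2 0 * C 0 2 :=
      mul_right_cancel₀ (mul_ne_zero (hC 0 1) (hC 3 0))
        (by linear_combination C 1 0 * C 0 3 * Q6 - C 0 2 * C 2 0 * Q3)
    have P7 : C 1 3 * C 1 0 * C 0 1 * C 0 2 = C 1 1 * C 1 2 * C 0 3 * C 0 0 :=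
      mul_right_cancel₀ (hC 2 0)
        (by linear_combination (-(C 1 0 * C 0 1)) * Q7 - C 0 0 * C 1 2 * P4)
    have R1 : C 1 1 ^ 2 * C 2 0 * C 0 3 * C 3 0 * C 0 2 = C 1 0 * C 0 1 := by
      linear_combination C 1 1 * C 3 0 * C 0 2 * P4 + C 2 3 * C 1 0 * C 0 1 * Q1 + C 1 0 * C 0 1 * E1
    have R2 : C 1 2 ^ 2 * C 0 1 * C 0 3 * C 2 0 * C 3 0 = C 1 0 * C 0 2 := by
      linear_combination C 0 3 * C 1 2 * C 3 0 * Q2 + C 1 0 * C 0 2 * E3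
    have R3 : C 1 3 ^ 2 * C 0 1 * C 0 2 * C 2 0 * C 3 0 = C 1 0 * C 0 3 := by
      linear_combination C 1 3 * C 0 2 * C 2 0 * Q3 + C 1 0 * C 0 3 * E2
    have X : C 1 3 ^ 2 * C 1 0 ^ 2 * C 0 1 ^ 2 * C 0 2 ^ 2
        = C 1 1 ^ 2 * C 1 2 ^ 2 * C 0 3 ^ 2 * C 0 0 ^ 2 := by
      linear_combination (C 1 3 * C 1 0 * C 0 1 * C 0 2 + C 1 1 * C 1 2 * C 0 3 * C 0 0) * P7
    have Su : C 1 1 ^ 2 * C 0 0 ^ 2 = C 1 0 ^ 2 * C 0 1 ^ 2 :=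
      mul_right_cancel₀ (mul_ne_zero (mul_ne_zero (hC 1 0) (hC 0 2)) (pow_ne_zero 2 (hC 0 3)))
        (by linear_combination (-(C 2 0 * C 3 0 * C 0 1 * C 0 3)) * X
              + C 1 0 ^ 2 * C 0 1 ^ 2 * C 0 2 * C 0 3 * R3
              - C 1 1 ^ 2 * C 0 0 ^ 2 * C 0 3 ^ 2 * R2)
    have Sv : C 1 2 ^ 2 * C 0 0 ^ 2 = C 1 0 ^ 2 * C 0 2 ^ 2 :=
      mul_right_cancel₀ (mul_ne_zero (mul_ne_zero (hC 1 0) (hC 0 1)) (pow_ne_zero 2 (hC 0 3)))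
        (by linear_combination (-(C 2 0 * C 3 0 * C 0 2 * C 0 3)) * X
              + C 1 0 ^ 2 * C 0 1 * C 0 2 ^ 2 * C 0 3 * R3
              - C 1 2 ^ 2 * C 0 0 ^ 2 * C 0 3 ^ 2 * R1)
    have Tq : C 0 1 * C 0 2 * C 0 3 * C 1 0 * C 2 0 * C 3 0 = C 0 0 ^ 2 :=
      mul_right_cancel₀ (mul_ne_zero (hC 1 0) (hC 0 1))
        (by linear_combination C 0 0 ^ 2 * R1 - C 0 2 * C 0 3 * C 2 0 * C 3 0 * Su)
    have T22 : C 2 2 * C 1 0 ^ 2 * C 0 1 * C 0 2 = C 1 1 * C 1 2 * C 0 0 * C 2 0 * C 0 2 :=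
      mul_right_cancel₀ (hC 0 3)
        (by linear_combination C 1 0 * C 0 1 * C 0 2 * P6 + C 2 0 * C 0 2 * P7)
    have T31 : C 3 1 * C 1 0 ^ 2 * C 0 2 = C 1 1 * C 1 2 * C 0 0 * C 3 0 :=
      mul_right_cancel₀ (hC 0 3)
        (by linear_combination (-(C 1 0 * C 0 2)) * Q3 + C 3 0 * P7)
    have n00 := hC 0 0; have n01 := hC 0 1; have n02 := hC 0 2; have n03 := hC 0 3
    have n10 := hC 1 0
    have hEu : C 1 1 * C 0 0 / (C 1 0 * C 0 1) = 1 ∨ C 1 1 * C 0 0 / (C 1 0 * C 0 1) = -1 := by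
      apply mul_self_eq_one_iff.mp
      rw [div_mul_div_comm, div_eq_one_iff_eq
        (mul_ne_zero (mul_ne_zero n10 n01) (mul_ne_zero n10 n01))]
      linear_combination Su
    have hEv : C 1 2 * C 0 0 / (C 1 0 * C 0 2) = 1 ∨ C 1 2 * C 0 0 / (C 1 0 * C 0 2) = -1 := by
      apply mul_self_eq_one_iff.mp
      rw [div_mul_div_comm, div_eq_one_iff_eq
        (mul_ne_zero (mul_ne_zero n10 n02) (mul_ne_zero n10 n02))]
      linear_combination Sv
    refine ⟨C 1 1 * C 0 0 / (C 1 0 * C 0 1), C 1 2 * C 0 0 / (C 1 0 * C 0 2),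
      C 0 0, C 0 1, C 0 2, C 0 3, C 1 0, C 2 0, C 3 0, hEu, hEv,
      hC 0 0, hC 0 1, hC 0 2, hC 0 3, hC 1 0, hC 2 0, hC 3 0,
      by linear_combination C 0 0 ^ 2 * Tq, ?_⟩
    intro i j
    fin_cases i <;> fin_cases j <;>
      simp only [Matrix.cons_val', Matrix.cons_val_zero, Matrix.cons_val_one,
        Matrix.head_cons, Matrix.head_fin_const, Matrix.empty_val', Matrix.cons_val_fin_one,
        Matrix.cons_val_two, Matrix.tail_cons, Matrix.cons_val_three, Matrix.of_apply,
        Fin.isValue, Fin.zero_eta, Fin.mk_one, Fin.reduceFinMk]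
    · rw [eq_div_iff n00]; ring
    · rw [eq_div_iff n00]; ring
    · rw [eq_div_iff n00]; ring
    · rw [eq_div_iff n00]; ring
    · rw [eq_div_iff n00]; ring
    · field_simp
    · field_simp
    · field_simp
      linear_combination P7
    · rw [eq_div_iff n00]; ring
    · field_simp
      linear_combination -Q2
    · field_simp
      exact mul_right_cancel₀ n02 (by linear_combination T22)
    · field_simp
      linear_combination -P4
    · rw [eq_div_iff n00]; ring
    · field_simp
      linear_combination T31
    · field_simp
      linear_combination -Q1
    · field_simp
      linear_combination P5
  · rintro ⟨εu, εv, a11, a12, a13, a14, a21, a31, a41, hεu, hεv, h11, h12, h13, h14,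
      h21, h31, h41, hP, hER⟩ w hw
    have h1 : ∏ i, C i (w i) =
        (∏ i, (!![1, 1, 1, 1;
                1, εu, εv, εu * εv;
                1, εv, εu * εv, εu;
                1, εu * εv, εu, εv] : Matrix (Fin 4) (Fin 4) K) i (w i)) *
          ((∏ i, (![a11, a21, a31, a41] : Fin 4 → K) i) *
           (∏ i, (![a11, a12, a13, a14] : Fin 4 → K) i)) / a11 ^ 4 := by
      rw [Finset.prod_congr rfl (fun i _ => hER i (w i)), Finset.prod_div_distrib,
        Finset.prod_mul_distrib, Finset.prod_mul_distrib,
        Equiv.prod_comp w (![a11, a12, a13, a14] : Fin 4 → K)]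
      norm_num [Finset.prod_const, Finset.card_univ]
      ring
    have h2 : (∏ i, (![a11, a21, a31, a41] : Fin 4 → K) i) *
        (∏ i, (![a11, a12, a13, a14] : Fin 4 → K) i) = a11 ^ 4 := by
      simp only [Fin.prod_univ_four, Matrix.cons_val_zero, Matrix.cons_val_one, Matrix.head_cons,
        Matrix.cons_val_two, Matrix.tail_cons, Matrix.cons_val_three]
      linear_combination hP
    rw [h1, h2, mul_div_assoc, div_self (pow_ne_zero 4 h11), mul_one]
    rcases hεu with rfl | rfl <;> rcases hεv with rfl | rfl
    · have hcast : ∀ i j : Fin 4, (!![1, 1, 1, 1; 1, 1, 1, 1*1; 1, 1, 1*1, 1; 1, 1*1, 1, 1] :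
          Matrix (Fin 4) (Fin 4) K) i j
          = (((!![1,1,1,1;1,1,1,1;1,1,1,1;1,1,1,1] : Matrix (Fin 4) (Fin 4) ℤ) i j : ℤ) : K) := by
        intro i j; fin_cases i <;> fin_cases j <;> norm_num
      rw [Finset.prod_congr rfl fun i _ => hcast i (w i), ← Int.cast_prod, signProdZ1 w hw,
        Int.cast_one]
    · have hcast : ∀ i j : Fin 4, (!![1, 1, 1, 1; 1, 1, -1, 1*-1; 1, -1, 1*-1, 1; 1, 1*-1, 1, -1] :
          Matrix (Fin 4) (Fin 4) K) i j
          = (((!![1,1,1,1;1,1,-1,-1;1,-1,-1,1;1,-1,1,-1] : Matrix (Fin 4) (Fin 4) ℤ) i j : ℤ) : K) := by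
        intro i j; fin_cases i <;> fin_cases j <;> norm_num
      rw [Finset.prod_congr rfl fun i _ => hcast i (w i), ← Int.cast_prod, signProdZ2 w hw,
        Int.cast_one]
    · have hcast : ∀ i j : Fin 4, (!![1, 1, 1, 1; 1, -1, 1, -1*1; 1, 1, -1*1, -1; 1, -1*1, -1, 1] :
          Matrix (Fin 4) (Fin 4) K) i j
          = (((!![1,1,1,1;1,-1,1,-1;1,1,-1,-1;1,-1,-1,1] : Matrix (Fin 4) (Fin 4) ℤ) i j : ℤ) : K) := by
        intro i j; fin_cases i <;> fin_cases j <;> norm_num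
      rw [Finset.prod_congr rfl fun i _ => hcast i (w i), ← Int.cast_prod, signProdZ3 w hw,
        Int.cast_one]
    · have hcast : ∀ i j : Fin 4, (!![1, 1, 1, 1; 1, -1, -1, -1*-1; 1, -1, -1*-1, -1; 1, -1*-1, -1, -1] :
          Matrix (Fin 4) (Fin 4) K) i j
          = (((!![1,1,1,1;1,-1,-1,1;1,-1,1,-1;1,1,-1,-1] : Matrix (Fin 4) (Fin 4) ℤ) i j : ℤ) : K) := by
        intro i j; fin_cases i <;> fin_cases j <;> norm_num
      rw [Finset.prod_congr rfl fun i _ => hcast i (w i), ← Int.cast_prod, signProdZ4 w hw,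
        Int.cast_one]
end

section
/- Let n ≥ 2, let α, β ∈ K, let Y = (y_{ij}) be the n×n matrix of independent variables, and regard det^{(α,β)}(Y) as a polynomial in the y_{ij}. Let k₁ ≠ k₂ and l₁ ≠ l₂ be indices and let σ ∈ S_n be an even permutation with σ(k₁) = l₁ and σ(k₂) = l₂. Then the (n−2)-fold partial derivative of det^{(α,β)}(Y) with respect to the variables y_{i,σ(i)} for all i ∉ {k₁, k₂} equals α·y_{k₁l₁}·y_{k₂l₂} + β·y_{k₁l₂}·y_{k₂l₁}, i.e. the generalized determinant det^{(α,β)} of the 2×2 submatrix of Y with rows k₁, k₂ and columns l₁, l₂. -/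
open Finset MvPolynomial

/-- The generalized determinant `det^{(α,β)}(Y)` of the matrix `Y = (y_{ij})` of independent
variables, as a polynomial in `K[y_{ij} : 1 ≤ i, j ≤ n]`. -/
noncomputable def gdetPoly (K : Type*) [Field K] (n : ℕ) (α β : K) :
    MvPolynomial (Fin n × Fin n) K :=
  MvPolynomial.C α *
      ∑ σ ∈ Finset.univ.filter (fun σ : Equiv.Perm (Fin n) => Equiv.Perm.sign σ = 1),
        ∏ i, MvPolynomial.X (i, σ i) +
    MvPolynomial.C β *
      ∑ σ ∈ Finset.univ.filter (fun σ : Equiv.Perm (Fin n) => Equiv.Perm.sign σ = -1),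
        ∏ i, MvPolynomial.X (i, σ i)

section Aux

variable {K : Type*} [Field K] {n : ℕ}

/-- The iterated partial derivative operator from the statement, over a general list. -/
noncomputable def gdetDfold (σ : Equiv.Perm (Fin n)) (k₁ k₂ : Fin n)
    (L : List (Fin n)) (p : MvPolynomial (Fin n × Fin n) K) : MvPolynomial (Fin n × Fin n) K :=
  L.foldr (fun i p => if i = k₁ ∨ i = k₂ then p else MvPolynomial.pderiv (i, σ i) p) p

lemma gdetDfold_cons (σ : Equiv.Perm (Fin n)) (k₁ k₂ i : Fin n) (L : List (Fin n))
    (p : MvPolynomial (Fin n × Fin n) K) :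
    gdetDfold σ k₁ k₂ (i :: L) p =
      if i = k₁ ∨ i = k₂ then gdetDfold σ k₁ k₂ L p
      else MvPolynomial.pderiv (i, σ i) (gdetDfold σ k₁ k₂ L p) := rfl

lemma gdetDfold_add (σ : Equiv.Perm (Fin n)) (k₁ k₂ : Fin n) (L : List (Fin n))
    (p q : MvPolynomial (Fin n × Fin n) K) :
    gdetDfold σ k₁ k₂ L (p + q) = gdetDfold σ k₁ k₂ L p + gdetDfold σ k₁ k₂ L q := by
  induction L with
  | nil => rfl
  | cons i L ih =>
    rw [gdetDfold_cons, gdetDfold_cons, gdetDfold_cons, ih]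
    split <;> simp

lemma gdetDfold_zero (σ : Equiv.Perm (Fin n)) (k₁ k₂ : Fin n) (L : List (Fin n)) :
    gdetDfold σ k₁ k₂ L (0 : MvPolynomial (Fin n × Fin n) K) = 0 := by
  induction L with
  | nil => rfl
  | cons i L ih =>
    rw [gdetDfold_cons, ih]
    split <;> simp

lemma gdetDfold_C_mul (σ : Equiv.Perm (Fin n)) (k₁ k₂ : Fin n) (L : List (Fin n)) (a : K)
    (p : MvPolynomial (Fin n × Fin n) K) :
    gdetDfold σ k₁ k₂ L (MvPolynomial.C a * p) = MvPolynomial.C a * gdetDfold σ k₁ k₂ L p := by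
  induction L with
  | nil => rfl
  | cons i L ih =>
    rw [gdetDfold_cons, gdetDfold_cons, ih]
    split
    · rfl
    · rw [pderiv_C_mul]

lemma gdetDfold_sum {ι : Type*} (σ : Equiv.Perm (Fin n)) (k₁ k₂ : Fin n) (L : List (Fin n))
    (s : Finset ι) (f : ι → MvPolynomial (Fin n × Fin n) K) :
    gdetDfold σ k₁ k₂ L (∑ x ∈ s, f x) = ∑ x ∈ s, gdetDfold σ k₁ k₂ L (f x) := by
  classical
  induction s using Finset.induction with
  | empty => simp [gdetDfold_zero]
  | insert _ _ hx ih =>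
    rw [Finset.sum_insert hx, Finset.sum_insert hx, gdetDfold_add, ih]

lemma gdetDfold_monomial (σ τ : Equiv.Perm (Fin n)) (k₁ k₂ : Fin n)
    (L : List (Fin n)) (hL : L.Nodup) (s : Finset (Fin n)) (hLs : ∀ i ∈ L, i ∈ s) :
    gdetDfold σ k₁ k₂ L
        (MvPolynomial.monomial (∑ i ∈ s, Finsupp.single (i, τ i) 1) (1 : K)) =
      if ∀ i ∈ L, ¬(i = k₁ ∨ i = k₂) → τ i = σ i then
        MvPolynomial.monomial
          (∑ i ∈ s \ (L.toFinset \ {k₁, k₂}), Finsupp.single (i, τ i) 1) (1 : K)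
      else 0 := by
  classical
  induction L with
  | nil => simp [gdetDfold]
  | cons i L ih =>
    obtain ⟨hiL, hLnd⟩ := List.nodup_cons.mp hL
    have hs' : ∀ j ∈ L, j ∈ s := fun j hj => hLs j (List.mem_cons_of_mem _ hj)
    have hIH := ih hLnd hs'
    rw [gdetDfold_cons, hIH]
    by_cases hik : i = k₁ ∨ i = k₂
    · rw [if_pos hik]
      have hset : (i :: L).toFinset \ ({k₁, k₂} : Finset (Fin n)) = L.toFinset \ {k₁, k₂} := by
        ext x
        simp only [List.toFinset_cons, Finset.mem_sdiff, Finset.mem_insert,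
          Finset.mem_singleton, List.mem_toFinset]
        rcases hik with rfl | rfl <;> tauto
      have hcond : (∀ j ∈ i :: L, ¬(j = k₁ ∨ j = k₂) → τ j = σ j) ↔
          (∀ j ∈ L, ¬(j = k₁ ∨ j = k₂) → τ j = σ j) := by
        rw [List.forall_mem_cons]
        exact ⟨fun h => h.2, fun h => ⟨fun hn => absurd hik hn, h⟩⟩
      rw [hset]
      by_cases hc : ∀ j ∈ L, ¬(j = k₁ ∨ j = k₂) → τ j = σ j
      · rw [if_pos hc, if_pos (hcond.mpr hc)]
      · rw [if_neg hc, if_neg (fun h => hc (hcond.mp h))]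
    · push_neg at hik
      obtain ⟨hik1, hik2⟩ := hik
      rw [if_neg (by tauto)]
      by_cases hc : ∀ j ∈ L, ¬(j = k₁ ∨ j = k₂) → τ j = σ j
      · rw [if_pos hc]
        set s' : Finset (Fin n) := s \ (L.toFinset \ {k₁, k₂}) with hs'def
        have hi_s' : i ∈ s' := by
          rw [hs'def, Finset.mem_sdiff]
          refine ⟨hLs i List.mem_cons_self, ?_⟩
          rw [Finset.mem_sdiff]
          push_neg
          intro hmem
          exact absurd (List.mem_toFinset.mp hmem) hiL
        rw [MvPolynomial.pderiv_monomial]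
        have heval : (∑ j ∈ s', Finsupp.single (j, τ j) 1) (i, σ i) =
            if τ i = σ i then 1 else 0 := by
          rw [Finset.sum_apply']
          rw [Finset.sum_eq_single i]
          · rw [Finsupp.single_apply]
            by_cases hτ : τ i = σ i
            · rw [if_pos hτ, if_pos (by rw [hτ])]
            · rw [if_neg hτ, if_neg (fun h => hτ (congrArg Prod.snd h))]
          · intro j _ hji
            exact Finsupp.single_eq_of_ne' (fun h => hji (congrArg Prod.fst h))
          · intro h
            exact absurd hi_s' h
        by_cases hτ : τ i = σ i
        · rw [if_pos (by
            rw [List.forall_mem_cons]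
            exact ⟨fun _ => hτ, hc⟩)]
          rw [heval, if_pos hτ, Nat.cast_one, mul_one]
          have hsub : (∑ j ∈ s', Finsupp.single (j, τ j) 1) - Finsupp.single (i, σ i) 1 =
              ∑ j ∈ s'.erase i, Finsupp.single (j, τ j) 1 := by
            rw [← Finset.add_sum_erase _ _ hi_s', hτ, add_tsub_cancel_left]
          rw [hsub]
          have hfs : s'.erase i = s \ (insert i L.toFinset \ {k₁, k₂}) := by
            rw [hs'def]
            ext x
            simp only [Finset.mem_erase, Finset.mem_sdiff, Finset.mem_insert,
              Finset.mem_singleton, List.mem_toFinset]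
            constructor
            · rintro ⟨hxi, hxs, hx⟩
              refine ⟨hxs, ?_⟩
              rintro ⟨hx1 | hx1, hx2⟩
              · exact hxi hx1
              · exact hx ⟨hx1, hx2⟩
            · rintro ⟨hxs, hx⟩
              refine ⟨?_, hxs, ?_⟩
              · rintro rfl
                exact hx ⟨Or.inl rfl, fun hc' => hc'.elim hik1 hik2⟩
              · rintro ⟨hx1, hx2⟩
                exact hx ⟨Or.inr hx1, hx2⟩
          rw [List.toFinset_cons, hfs]
        · rw [if_neg (by
            rw [List.forall_mem_cons]
            rintro ⟨h1, _⟩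
            exact hτ (h1 (fun hc' => hc'.elim hik1 hik2)))]
          rw [heval, if_neg hτ, Nat.cast_zero, mul_zero, map_zero]
      · rw [if_neg hc, map_zero, if_neg (fun h =>
          hc fun j hj => h j (List.mem_cons_of_mem _ hj))]

lemma prod_X_eq_monomial' (τ : Equiv.Perm (Fin n)) :
    (∏ i, MvPolynomial.X (i, τ i) : MvPolynomial (Fin n × Fin n) K) =
      MvPolynomial.monomial (∑ i : Fin n, Finsupp.single (i, τ i) 1) (1 : K) := by
  rw [MvPolynomial.monomial_sum_one]
  rfl

lemma perm_classify (σ τ : Equiv.Perm (Fin n)) (k₁ k₂ : Fin n) (hk : k₁ ≠ k₂)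
    (h : ∀ i, i ≠ k₁ → i ≠ k₂ → τ i = σ i) :
    τ = σ ∨ τ = Equiv.swap (σ k₁) (σ k₂) * σ := by
  have key : ∀ k, k = k₁ ∨ k = k₂ → τ k = σ k₁ ∨ τ k = σ k₂ := by
    intro k hk'
    by_contra hcon
    push_neg at hcon
    set j := σ.symm (τ k) with hj
    have hσj : σ j = τ k := σ.apply_symm_apply _
    have hj1 : j ≠ k₁ := fun hjk => hcon.1 (by rw [hjk] at hσj; exact hσj.symm)
    have hj2 : j ≠ k₂ := fun hjk => hcon.2 (by rw [hjk] at hσj; exact hσj.symm)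
    have : τ j = τ k := by rw [h j hj1 hj2, hσj]
    have hjk : j = k := τ.injective this
    rcases hk' with rfl | rfl
    · exact hj1 hjk
    · exact hj2 hjk
  rcases key k₁ (Or.inl rfl) with h1 | h1
  · left
    refine Equiv.ext fun i => ?_
    by_cases hi1 : i = k₁
    · rw [hi1, h1]
    by_cases hi2 : i = k₂
    · subst hi2
      rcases key i (Or.inr rfl) with h2 | h2
      · exact absurd (τ.injective (h1 ▸ h2 : τ i = τ k₁)) hk.symm
      · exact h2
    · exact h i hi1 hi2
  · right
    have h2 : τ k₂ = σ k₁ := by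
      rcases key k₂ (Or.inr rfl) with h2 | h2
      · exact h2
      · exact absurd (τ.injective (h1 ▸ h2 : τ k₂ = τ k₁)).symm hk
    refine Equiv.ext fun i => ?_
    simp only [Equiv.Perm.coe_mul, Function.comp_apply]
    by_cases hi1 : i = k₁
    · rw [hi1, h1, Equiv.swap_apply_left]
    by_cases hi2 : i = k₂
    · rw [hi2, h2, Equiv.swap_apply_right]
    · rw [h i hi1 hi2, Equiv.swap_apply_of_ne_of_ne
        (fun hc => hi1 (σ.injective hc)) (fun hc => hi2 (σ.injective hc))]

end Aux

/-- differentiating `det^{(α,β)}(Y)` formally with respect to the `n − 2`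
variables `y_{i,σ(i)}`, `i ∉ {k₁, k₂}`, for an even permutation `σ` with `σ(k₁) = l₁` and
`σ(k₂) = l₂`, yields `α·y_{k₁l₁}·y_{k₂l₂} + β·y_{k₁l₂}·y_{k₂l₁}`, the generalized
determinant of the `2 × 2` submatrix of `Y` with rows `k₁, k₂` and columns `l₁, l₂`. -/
theorem pderiv_gdetPoly {K : Type*} [Field K] [CharZero K] {n : ℕ} (hn : 2 ≤ n)
    (α β : K) (k₁ k₂ l₁ l₂ : Fin n) (hk : k₁ ≠ k₂) (hl : l₁ ≠ l₂)
    (σ : Equiv.Perm (Fin n)) (hσ : Equiv.Perm.sign σ = 1)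
    (hσ₁ : σ k₁ = l₁) (hσ₂ : σ k₂ = l₂) :
    (List.finRange n).foldr
        (fun i p => if i = k₁ ∨ i = k₂ then p else MvPolynomial.pderiv (i, σ i) p)
        (gdetPoly K n α β) =
      MvPolynomial.C α * MvPolynomial.X (k₁, l₁) * MvPolynomial.X (k₂, l₂) +
        MvPolynomial.C β * MvPolynomial.X (k₁, l₂) * MvPolynomial.X (k₂, l₁) := by
  classical
  have hX : ∀ a : Fin n × Fin n,
      (MvPolynomial.X a : MvPolynomial (Fin n × Fin n) K) =
        MvPolynomial.monomial (Finsupp.single a 1) 1 := fun a => rfl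
  have hmain : ∀ τ : Equiv.Perm (Fin n),
      gdetDfold σ k₁ k₂ (List.finRange n) (∏ i, MvPolynomial.X (i, τ i)) =
        if ∀ i, i ≠ k₁ → i ≠ k₂ → τ i = σ i then
          MvPolynomial.X (k₁, τ k₁) * MvPolynomial.X (k₂, τ k₂)
        else (0 : MvPolynomial (Fin n × Fin n) K) := by
    intro τ
    rw [prod_X_eq_monomial']
    rw [gdetDfold_monomial σ τ k₁ k₂ (List.finRange n) (List.nodup_finRange n) Finset.univ
      (fun i _ => Finset.mem_univ i)]
    have hset : Finset.univ \ ((List.finRange n).toFinset \ {k₁, k₂}) =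
        ({k₁, k₂} : Finset (Fin n)) := by
      rw [List.toFinset_finRange, Finset.sdiff_sdiff_self_left, Finset.univ_inter]
    have hcond : (∀ i ∈ List.finRange n, ¬(i = k₁ ∨ i = k₂) → τ i = σ i) ↔
        (∀ i, i ≠ k₁ → i ≠ k₂ → τ i = σ i) := by
      constructor
      · intro h i h1 h2
        exact h i (List.mem_finRange i) (fun hc => hc.elim h1 h2)
      · intro h i _ hi
        push_neg at hi
        exact h i hi.1 hi.2
    rw [hset]
    by_cases hc : ∀ i, i ≠ k₁ → i ≠ k₂ → τ i = σ i
    · rw [if_pos (hcond.mpr hc), if_pos hc, Finset.sum_pair hk, hX, hX,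
        MvPolynomial.monomial_mul, one_mul]
    · rw [if_neg (fun h => hc (hcond.mp h)), if_neg hc]
  have hswap_sign : Equiv.Perm.sign (Equiv.swap l₁ l₂ * σ) = -1 := by
    rw [Equiv.Perm.sign_mul, Equiv.Perm.sign_swap hl, hσ, mul_one]
  have hclass : ∀ τ : Equiv.Perm (Fin n), (∀ i, i ≠ k₁ → i ≠ k₂ → τ i = σ i) →
      τ = σ ∨ τ = Equiv.swap l₁ l₂ * σ := by
    intro τ h
    have := perm_classify σ τ k₁ k₂ hk h
    rwa [hσ₁, hσ₂] at this
  have hsum1 : ∑ τ ∈ Finset.univ.filter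
        (fun τ : Equiv.Perm (Fin n) => Equiv.Perm.sign τ = 1),
      gdetDfold σ k₁ k₂ (List.finRange n)
        (∏ i, MvPolynomial.X (i, τ i) : MvPolynomial (Fin n × Fin n) K) =
      MvPolynomial.X (k₁, l₁) * MvPolynomial.X (k₂, l₂) := by
    rw [Finset.sum_eq_single σ]
    · rw [hmain σ, if_pos (fun i _ _ => rfl), hσ₁, hσ₂]
    · intro τ hτm hτne
      rw [hmain τ, if_neg]
      intro h
      rcases hclass τ h with rfl | rfl
      · exact hτne rfl
      · obtain ⟨-, hτs⟩ := Finset.mem_filter.mp hτm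
        rw [hswap_sign] at hτs
        exact absurd hτs (by decide)
    · intro habs
      exact absurd (Finset.mem_filter.mpr ⟨Finset.mem_univ σ, hσ⟩) habs
  have hsum2 : ∑ τ ∈ Finset.univ.filter
        (fun τ : Equiv.Perm (Fin n) => Equiv.Perm.sign τ = -1),
      gdetDfold σ k₁ k₂ (List.finRange n)
        (∏ i, MvPolynomial.X (i, τ i) : MvPolynomial (Fin n × Fin n) K) =
      MvPolynomial.X (k₁, l₂) * MvPolynomial.X (k₂, l₁) := by
    rw [Finset.sum_eq_single (Equiv.swap l₁ l₂ * σ)]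
    · rw [hmain]
      rw [if_pos]
      · have e1 : (Equiv.swap l₁ l₂ * σ) k₁ = l₂ := by
          simp only [Equiv.Perm.coe_mul, Function.comp_apply, hσ₁, Equiv.swap_apply_left]
        have e2 : (Equiv.swap l₁ l₂ * σ) k₂ = l₁ := by
          simp only [Equiv.Perm.coe_mul, Function.comp_apply, hσ₂, Equiv.swap_apply_right]
        rw [e1, e2]
      · intro i h1 h2
        simp only [Equiv.Perm.coe_mul, Function.comp_apply]
        exact Equiv.swap_apply_of_ne_of_ne
          (fun hc => h1 (σ.injective (hc.trans hσ₁.symm)))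
          (fun hc => h2 (σ.injective (hc.trans hσ₂.symm)))
    · intro τ hτm hτne
      rw [hmain τ, if_neg]
      intro h
      rcases hclass τ h with rfl | rfl
      · obtain ⟨-, hτs⟩ := Finset.mem_filter.mp hτm
        rw [hσ] at hτs
        exact absurd hτs (by decide)
      · exact hτne rfl
    · intro habs
      exact absurd (Finset.mem_filter.mpr ⟨Finset.mem_univ (Equiv.swap l₁ l₂ * σ), hswap_sign⟩) habs
  rw [show (List.finRange n).foldr
        (fun i p => if i = k₁ ∨ i = k₂ then p else MvPolynomial.pderiv (i, σ i) p)
        (gdetPoly K n α β) = gdetDfold σ k₁ k₂ (List.finRange n) (gdetPoly K n α β) from rfl]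
  unfold gdetPoly
  rw [gdetDfold_add, gdetDfold_C_mul, gdetDfold_C_mul, gdetDfold_sum, gdetDfold_sum,
    hsum1, hsum2, mul_assoc, mul_assoc]
end

section
/- Let n ≥ 4 and let α, β ∈ K satisfy α ≠ β and α ≠ −β. If T : Mat_n(K) → Mat_n(K) is a bijective K-linear map that stabilizes det^{(α,β)}, then for every pair (i,j), the matrix F := T(E_{ij}) satisfies F_{k₁l₁}·F_{k₂l₂} = 0 for all indices with k₁ ≠ k₂ and l₁ ≠ l₂; consequently F is the zero matrix, a matrix supported on a single row, or a matrix supported on a single column. -/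
open Matrix Finset

noncomputable def evenDet {K : Type*} [Field K] {n : ℕ} (A : Matrix (Fin n) (Fin n) K) : K :=
  ∑ σ ∈ Finset.univ.filter (fun σ : Equiv.Perm (Fin n) => Equiv.Perm.sign σ = 1),
    ∏ i, A i (σ i)

noncomputable def oddDet {K : Type*} [Field K] {n : ℕ} (A : Matrix (Fin n) (Fin n) K) : K :=
  ∑ σ ∈ Finset.univ.filter (fun σ : Equiv.Perm (Fin n) => Equiv.Perm.sign σ = -1),
    ∏ i, A i (σ i)

/-- The generalized determinant `det^{(α,β)}`. -/
noncomputable def gdet {K : Type*} [Field K] {n : ℕ} (α β : K) (A : Matrix (Fin n) (Fin n) K) : K :=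
  α * evenDet A + β * oddDet A

/-- The permutation matrix `P = (δ_{i, σ(j)})`. -/
def permMat (K : Type*) [Field K] {n : ℕ} (σ : Equiv.Perm (Fin n)) : Matrix (Fin n) (Fin n) K :=
  fun i j => if i = σ j then 1 else 0

section Aux

variable {K : Type*} [Field K] {n : ℕ}

/-- The weight of a permutation in the generalized determinant. -/
noncomputable def gw (α β : K) (σ : Equiv.Perm (Fin n)) : K :=
  if Equiv.Perm.sign σ = 1 then α else β

lemma gdet_eq_sum (α β : K) (A : Matrix (Fin n) (Fin n) K) :
    gdet α β A = ∑ σ : Equiv.Perm (Fin n), gw α β σ * ∏ i, A i (σ i) := by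
  have hpart := Finset.sum_filter_add_sum_filter_not Finset.univ
    (fun σ : Equiv.Perm (Fin n) => Equiv.Perm.sign σ = 1)
    (fun σ => gw α β σ * ∏ i, A i (σ i))
  rw [gdet, evenDet, oddDet, Finset.mul_sum, Finset.mul_sum, ← hpart]
  congr 1
  · exact Finset.sum_congr rfl fun σ hσ => by
      simp only [Finset.mem_filter] at hσ
      simp [gw, hσ.2]
  · rw [show Finset.univ.filter (fun σ : Equiv.Perm (Fin n) => ¬ Equiv.Perm.sign σ = 1)
        = Finset.univ.filter (fun σ : Equiv.Perm (Fin n) => Equiv.Perm.sign σ = -1) from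
      Finset.filter_congr fun σ _ => by
        rcases Int.units_eq_one_or (Equiv.Perm.sign σ) with h | h <;> simp [h]]
    exact Finset.sum_congr rfl fun σ hσ => by
      simp only [Finset.mem_filter] at hσ
      have : Equiv.Perm.sign σ ≠ 1 := by rw [hσ.2]; decide
      simp [gw, this]

/-- `gdet` as a multilinear map in the rows. -/
noncomputable def gmap (α β : K) : MultilinearMap K (fun _ : Fin n => (Fin n → K)) K :=
  ∑ σ : Equiv.Perm (Fin n), gw α β σ •
    ((MultilinearMap.mkPiAlgebra K (Fin n) K).compLinearMap fun i => LinearMap.proj (σ i))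

lemma gmap_apply (α β : K) (v : Fin n → Fin n → K) :
    gmap α β v = ∑ σ : Equiv.Perm (Fin n), gw α β σ * ∏ i, v i (σ i) := by
  simp [gmap, MultilinearMap.sum_apply, smul_eq_mul]

lemma gdet_eq_gmap (α β : K) (A : Matrix (Fin n) (Fin n) K) :
    gdet α β A = gmap α β (fun i => A i) := by
  rw [gdet_eq_sum, gmap_apply]

lemma prod_entry (B : Matrix (Fin n) (Fin n) K) (i j : Fin n) (x : K) (σ : Equiv.Perm (Fin n)) :
    (∏ k, (B + x • Matrix.single i j 1 : Matrix (Fin n) (Fin n) K) k (σ k))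
      = (∏ k, B k (σ k)) + x * (if σ i = j then ∏ k ∈ Finset.univ.erase i, B k (σ k) else 0) := by
  have hmem : i ∈ (Finset.univ : Finset (Fin n)) := Finset.mem_univ i
  rw [← Finset.mul_prod_erase Finset.univ _ hmem,
    ← Finset.mul_prod_erase Finset.univ (fun k => B k (σ k)) hmem]
  have h1 : ∀ k ∈ Finset.univ.erase i,
      (B + x • Matrix.single i j 1 : Matrix (Fin n) (Fin n) K) k (σ k) = B k (σ k) := by
    intro k hk
    have hk' : k ≠ i := (Finset.mem_erase.1 hk).1
    simp [Matrix.add_apply, Matrix.smul_apply, Matrix.single, Ne.symm hk']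
  rw [Finset.prod_congr rfl h1]
  have h2 : (B + x • Matrix.single i j 1 : Matrix (Fin n) (Fin n) K) i (σ i)
      = B i (σ i) + x * (if σ i = j then 1 else 0) := by
    simp [Matrix.add_apply, Matrix.smul_apply, Matrix.single, eq_comm]
  rw [h2]
  by_cases h : σ i = j <;> simp [h] <;> ring

/-- `gdet` is affine in each single entry. -/
lemma gdet_affine (α β : K) (B : Matrix (Fin n) (Fin n) K) (i j : Fin n) (x : K) :
    gdet α β (B + x • Matrix.single i j 1)
      = gdet α β B + x * (gdet α β (B + Matrix.single i j 1) - gdet α β B) := by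
  have key : ∀ y : K, gdet α β (B + y • Matrix.single i j 1)
      = gdet α β B + y * ∑ σ : Equiv.Perm (Fin n), gw α β σ *
          (if σ i = j then ∏ k ∈ Finset.univ.erase i, B k (σ k) else 0) := by
    intro y
    rw [gdet_eq_sum, gdet_eq_sum]
    simp only [prod_entry]
    rw [Finset.mul_sum, ← Finset.sum_add_distrib]
    exact Finset.sum_congr rfl fun σ _ => by ring
  have k1 := key 1
  rw [one_smul] at k1
  rw [key x, k1]
  ring

/-- Multilinear expansion of `gdet (C + x • F)`. -/
lemma gdet_expand (α β : K) (C F : Matrix (Fin n) (Fin n) K) (x : K) :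
    gdet α β (C + x • F)
      = ∑ S : Finset (Fin n), x ^ S.card *
          gmap α β (S.piecewise (fun k => F k) (fun k => C k)) := by
  have hrows : (fun k => (C + x • F : Matrix (Fin n) (Fin n) K) k)
      = (fun k => x • F k) + (fun k => C k) := by
    funext k
    funext l
    simp [Matrix.add_apply, Matrix.smul_apply, add_comm]
  rw [gdet_eq_gmap, hrows, MultilinearMap.map_add_univ]
  refine Finset.sum_congr rfl fun S _ => ?_
  set m : Fin n → Fin n → K := S.piecewise (fun k => F k) (fun k => C k) with hm
  have hpw : S.piecewise (fun k => x • F k) (fun k => C k)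
      = S.piecewise (fun k => x • m k) m := by
    funext k
    by_cases hk : k ∈ S
    · simp [Finset.piecewise_eq_of_mem _ _ _ hk, hm]
    · simp [Finset.piecewise_eq_of_notMem _ _ _ hk, hm]
  rw [hpw, MultilinearMap.map_piecewise_smul]
  simp [Finset.prod_const, smul_eq_mul]

/-- Extraction of the vanishing of the quadratic coefficient. -/
lemma coeff2_zero [CharZero K] (α β : K) (F : Matrix (Fin n) (Fin n) K)
    (hline : ∀ (C : Matrix (Fin n) (Fin n) K) (x : K),
      gdet α β (C + x • F) = gdet α β C + x * (gdet α β (C + F) - gdet α β C))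
    (C : Matrix (Fin n) (Fin n) K) :
    ∑ S ∈ Finset.univ.filter (fun S : Finset (Fin n) => S.card = 2),
      gmap α β (S.piecewise (fun k => F k) (fun k => C k)) = 0 := by
  set G : Finset (Fin n) → K := fun S => gmap α β (S.piecewise (fun k => F k) (fun k => C k))
    with hG
  set p : Polynomial K := ∑ S : Finset (Fin n), Polynomial.C (G S) * Polynomial.X ^ S.card
    with hp
  set q : Polynomial K := Polynomial.C (gdet α β C)
      + Polynomial.C (gdet α β (C + F) - gdet α β C) * Polynomial.X with hq
  have heval : ∀ x : K, p.eval x = q.eval x := by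
    intro x
    have h1 : (∑ S : Finset (Fin n), G S * x ^ S.card)
        = gdet α β C + x * (gdet α β (C + F) - gdet α β C) := by
      rw [← hline C x, gdet_expand]
      exact Finset.sum_congr rfl fun S _ => by rw [hG]; ring
    simp only [hp, hq, Polynomial.eval_finset_sum, Polynomial.eval_mul, Polynomial.eval_pow,
      Polynomial.eval_C, Polynomial.eval_X, Polynomial.eval_add]
    rw [h1]
    ring
  have hpq : p = q := Polynomial.funext heval
  have hc := congrArg (fun r : Polynomial K => r.coeff 2) hpq
  simp only [hp, hq, Polynomial.finset_sum_coeff, Polynomial.coeff_C_mul, Polynomial.coeff_X_pow,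
    Polynomial.coeff_add, Polynomial.coeff_C, Polynomial.coeff_X] at hc
  norm_num at hc
  rw [← Finset.sum_filter] at hc
  rw [show (Finset.univ.filter fun S : Finset (Fin n) => S.card = 2)
      = Finset.univ.filter fun S : Finset (Fin n) => 2 = S.card from
    Finset.filter_congr fun S _ => by constructor <;> (intro h; omega)]
  exact hc

end Aux

section Aux2
variable {K : Type*} [Field K] {n : ℕ}

lemma prod_two_aux (f : Fin n → K) (k₁ k₂ : Fin n) (h : k₁ ≠ k₂)
    (h1 : ∀ i, i ≠ k₁ → i ≠ k₂ → f i = 1) : ∏ i, f i = f k₁ * f k₂ := by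
  rw [← Finset.mul_prod_erase Finset.univ f (Finset.mem_univ k₁),
    ← Finset.mul_prod_erase _ f (Finset.mem_erase.2 ⟨Ne.symm h, Finset.mem_univ k₂⟩)]
  have hone : ∏ i ∈ (Finset.univ.erase k₁).erase k₂, f i = 1 := by
    refine Finset.prod_eq_one fun i hi => ?_
    simp only [Finset.mem_erase] at hi
    exact h1 i hi.2.1 hi.1
  rw [hone, mul_one]

/-- A partial permutation matrix with rows `k₁, k₂` zeroed out. -/
def pmat (τ : Equiv.Perm (Fin n)) (k₁ k₂ : Fin n) : Matrix (Fin n) (Fin n) K :=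
  fun k l => if k = k₁ ∨ k = k₂ then 0 else if l = τ k then 1 else 0

lemma gw_pos {α β : K} {σ : Equiv.Perm (Fin n)} (h : Equiv.Perm.sign σ = 1) : gw α β σ = α :=
  if_pos h

lemma gw_neg {α β : K} {σ : Equiv.Perm (Fin n)} (h : Equiv.Perm.sign σ = -1) : gw α β σ = β :=
  if_neg (by rw [h]; decide)

lemma key_pair [CharZero K] (α β : K) (F : Matrix (Fin n) (Fin n) K)
    (hline : ∀ (C : Matrix (Fin n) (Fin n) K) (x : K),
      gdet α β (C + x • F) = gdet α β C + x * (gdet α β (C + F) - gdet α β C))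
    (k₁ k₂ l₁ l₂ : Fin n) (hk : k₁ ≠ k₂) (hl : l₁ ≠ l₂)
    (τ : Equiv.Perm (Fin n)) (ht1 : τ k₁ = l₁) (ht2 : τ k₂ = l₂) :
    gw α β τ * (F k₁ l₁ * F k₂ l₂)
      + gw α β (Equiv.swap l₁ l₂ * τ) * (F k₁ l₂ * F k₂ l₁) = 0 := by
  have hz := coeff2_zero α β F hline (pmat τ k₁ k₂)
  set C : Matrix (Fin n) (Fin n) K := pmat τ k₁ k₂ with hC
  set S₀ : Finset (Fin n) := {k₁, k₂} with hS₀
  have hS₀card : S₀.card = 2 := Finset.card_pair hk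
  set τ' : Equiv.Perm (Fin n) := Equiv.swap l₁ l₂ * τ with hτ'
  have hττ' : τ ≠ τ' := by
    intro hcon
    have : τ k₁ = τ' k₁ := by rw [← hcon]
    rw [ht1] at this
    have : l₁ = Equiv.swap l₁ l₂ (τ k₁) := this
    rw [ht1, Equiv.swap_apply_left] at this
    exact hl this
  -- the sum over card-2 subsets reduces to the single subset S₀
  have hsingle : (∑ S ∈ Finset.univ.filter (fun S : Finset (Fin n) => S.card = 2),
      gmap α β (S.piecewise (fun k => F k) (fun k => C k)))
      = gmap α β (S₀.piecewise (fun k => F k) (fun k => C k)) := by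
    refine Finset.sum_eq_single_of_mem S₀
      (Finset.mem_filter.2 ⟨Finset.mem_univ _, hS₀card⟩) ?_
    intro S hS hne
    have hsub : ¬ S₀ ⊆ S := by
      intro hsub
      exact hne (Finset.eq_of_subset_of_card_le hsub
        (by rw [(Finset.mem_filter.1 hS).2, hS₀card])).symm
    obtain ⟨r, hrS₀, hrS⟩ := Finset.not_subset.1 hsub
    rw [gmap_apply]
    refine Finset.sum_eq_zero fun σ _ => ?_
    have hr' : r = k₁ ∨ r = k₂ := by simpa [hS₀] using hrS₀
    have hv : (S.piecewise (fun k => F k) (fun k => C k)) r (σ r) = 0 := by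
      rw [Finset.piecewise_eq_of_notMem _ _ _ hrS]
      simp [hC, pmat, hr']
    rw [Finset.prod_eq_zero (Finset.mem_univ r) hv, mul_zero]
  -- entries of the mixed matrix
  set v : Fin n → Fin n → K := S₀.piecewise (fun k => F k) (fun k => C k) with hvdef
  have hvin : ∀ i, (i = k₁ ∨ i = k₂) → v i = F i := by
    intro i hi
    have : i ∈ S₀ := by simp [hS₀, hi]
    rw [hvdef, Finset.piecewise_eq_of_mem _ _ _ this]
  have hvout : ∀ i, i ≠ k₁ → i ≠ k₂ → ∀ c, v i c = if c = τ i then 1 else 0 := by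
    intro i hi1 hi2 c
    have : i ∉ S₀ := by simp [hS₀, hi1, hi2]
    rw [hvdef, Finset.piecewise_eq_of_notMem _ _ _ this]
    simp [hC, pmat, hi1, hi2]
  -- compute the value at S₀
  have hGS₀ : gmap α β v = gw α β τ * (F k₁ l₁ * F k₂ l₂)
      + gw α β τ' * (F k₁ l₂ * F k₂ l₁) := by
    rw [gmap_apply]
    have hpair_sub : ({τ, τ'} : Finset (Equiv.Perm (Fin n))) ⊆ Finset.univ :=
      Finset.subset_univ _
    rw [← Finset.sum_subset hpair_sub ?_]
    · rw [Finset.sum_pair hττ']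
      have hp1 : ∏ i, v i (τ i) = F k₁ l₁ * F k₂ l₂ := by
        rw [prod_two_aux (fun i => v i (τ i)) k₁ k₂ hk ?_]
        · rw [hvin k₁ (Or.inl rfl), hvin k₂ (Or.inr rfl), ht1, ht2]
        · intro i hi1 hi2
          show v i (τ i) = 1
          rw [hvout i hi1 hi2]
          simp
      have hτ'k₁ : τ' k₁ = l₂ := by
        show Equiv.swap l₁ l₂ (τ k₁) = l₂
        rw [ht1, Equiv.swap_apply_left]
      have hτ'k₂ : τ' k₂ = l₁ := by
        show Equiv.swap l₁ l₂ (τ k₂) = l₁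
        rw [ht2, Equiv.swap_apply_right]
      have hτ'out : ∀ i, i ≠ k₁ → i ≠ k₂ → τ' i = τ i := by
        intro i hi1 hi2
        show Equiv.swap l₁ l₂ (τ i) = τ i
        refine Equiv.swap_apply_of_ne_of_ne ?_ ?_
        · exact fun h => hi1 (τ.injective (h.trans ht1.symm))
        · exact fun h => hi2 (τ.injective (h.trans ht2.symm))
      have hp2 : ∏ i, v i (τ' i) = F k₁ l₂ * F k₂ l₁ := by
        rw [prod_two_aux (fun i => v i (τ' i)) k₁ k₂ hk ?_]
        · rw [hvin k₁ (Or.inl rfl), hvin k₂ (Or.inr rfl), hτ'k₁, hτ'k₂]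
        · intro i hi1 hi2
          show v i (τ' i) = 1
          rw [hvout i hi1 hi2, hτ'out i hi1 hi2]
          simp
      rw [hp1, hp2]
    · intro σ _ hσ
      simp only [Finset.mem_insert, Finset.mem_singleton, not_or] at hσ
      -- show the term vanishes
      by_contra hcon
      have hexists : ∃ i, i ≠ k₁ ∧ i ≠ k₂ ∧ σ i ≠ τ i := by
        by_contra h'
        push_neg at h'
        have hagree : ∀ i, i ≠ k₁ → i ≠ k₂ → σ i = τ i := fun i h1 h2 => h' i h1 h2
        have hmem : ∀ r, (r = k₁ ∨ r = k₂) → (σ r = l₁ ∨ σ r = l₂) := by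
          intro r hr
          by_contra h''
          push_neg at h''
          have h1 : τ.symm (σ r) ≠ k₁ := by
            intro hcon2
            exact h''.1 (by rw [← ht1, ← hcon2, Equiv.apply_symm_apply])
          have h2 : τ.symm (σ r) ≠ k₂ := by
            intro hcon2
            exact h''.2 (by rw [← ht2, ← hcon2, Equiv.apply_symm_apply])
          have h3 : σ (τ.symm (σ r)) = τ (τ.symm (σ r)) := hagree _ h1 h2
          rw [Equiv.apply_symm_apply] at h3
          have h4 : τ.symm (σ r) = r := σ.injective h3
          have h5 : τ r = σ r := by
            have h6 := Equiv.apply_symm_apply τ (σ r)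
            rw [h4] at h6
            exact h6
          rcases hr with rfl | rfl
          · exact h''.1 (by rw [← h5, ht1])
          · exact h''.2 (by rw [← h5, ht2])
        rcases hmem k₁ (Or.inl rfl) with h1 | h1
        · have h2 : σ k₂ = l₂ := by
            rcases hmem k₂ (Or.inr rfl) with h2 | h2
            · exact absurd (σ.injective (h1.trans h2.symm)) hk
            · exact h2
          exact hσ.1 (Equiv.ext fun i => by
            by_cases hi1 : i = k₁
            · subst hi1; rw [h1, ht1]
            by_cases hi2 : i = k₂
            · subst hi2; rw [h2, ht2]
            · exact hagree i hi1 hi2)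
        · have h2 : σ k₂ = l₁ := by
            rcases hmem k₂ (Or.inr rfl) with h2 | h2
            · exact h2
            · exact absurd (σ.injective (h1.trans h2.symm)) hk
          refine hσ.2 (Equiv.ext fun i => ?_)
          show σ i = Equiv.swap l₁ l₂ (τ i)
          by_cases hi1 : i = k₁
          · subst hi1; rw [h1, ht1, Equiv.swap_apply_left]
          by_cases hi2 : i = k₂
          · subst hi2; rw [h2, ht2, Equiv.swap_apply_right]
          · rw [hagree i hi1 hi2]
            refine (Equiv.swap_apply_of_ne_of_ne ?_ ?_).symm
            · exact fun h => hi1 (τ.injective (h.trans ht1.symm))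
            · exact fun h => hi2 (τ.injective (h.trans ht2.symm))
      obtain ⟨i, hi1, hi2, hi3⟩ := hexists
      have : v i (σ i) = 0 := by rw [hvout i hi1 hi2]; simp [hi3]
      rw [Finset.prod_eq_zero (Finset.mem_univ i) this, mul_zero] at hcon
      exact hcon rfl
  rw [hsingle] at hz
  rw [← hGS₀]
  exact hz

end Aux2

section Aux3
variable {K : Type*} [Field K] {n : ℕ}

lemma product_zero [CharZero K] (hn : 4 ≤ n) (α β : K) (hαβ : α ≠ β) (hαβ' : α ≠ -β)
    (F : Matrix (Fin n) (Fin n) K)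
    (hline : ∀ (C : Matrix (Fin n) (Fin n) K) (x : K),
      gdet α β (C + x • F) = gdet α β C + x * (gdet α β (C + F) - gdet α β C))
    (k₁ k₂ l₁ l₂ : Fin n) (hk : k₁ ≠ k₂) (hl : l₁ ≠ l₂) :
    F k₁ l₁ * F k₂ l₂ = 0 := by
  -- construct a permutation sending k₁ ↦ l₁, k₂ ↦ l₂
  set g : Equiv.Perm (Fin n) := Equiv.swap k₁ l₁ with hg
  set h : Equiv.Perm (Fin n) := Equiv.swap (g k₂) l₂ with hh
  set τ₀ : Equiv.Perm (Fin n) := g.trans h with hτ₀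
  have hgk : g k₁ = l₁ := Equiv.swap_apply_left _ _
  have ht1 : τ₀ k₁ = l₁ := by
    show h (g k₁) = l₁
    rw [hgk]
    have h1 : l₁ ≠ g k₂ := fun hcon => hk (g.injective (hgk.trans hcon))
    exact Equiv.swap_apply_of_ne_of_ne h1 hl
  have ht2 : τ₀ k₂ = l₂ := Equiv.swap_apply_left _ _
  -- pick two distinct points outside {k₁, k₂}
  have hcard : 1 < (Finset.univ \ ({k₁, k₂} : Finset (Fin n))).card := by
    rw [Finset.card_sdiff_of_subset (Finset.subset_univ _), Finset.card_univ, Fintype.card_fin,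
      Finset.card_pair hk]
    omega
  obtain ⟨a, ha, b, hb, hab⟩ := Finset.one_lt_card.1 hcard
  simp only [Finset.mem_sdiff, Finset.mem_univ, true_and, Finset.mem_insert,
    Finset.mem_singleton, not_or] at ha hb
  set τ₁ : Equiv.Perm (Fin n) := (Equiv.swap a b).trans τ₀ with hτ₁
  have hswk₁ : Equiv.swap a b k₁ = k₁ :=
    Equiv.swap_apply_of_ne_of_ne (Ne.symm ha.1) (Ne.symm hb.1)
  have hswk₂ : Equiv.swap a b k₂ = k₂ :=
    Equiv.swap_apply_of_ne_of_ne (Ne.symm ha.2) (Ne.symm hb.2)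
  have ht1' : τ₁ k₁ = l₁ := by show τ₀ (Equiv.swap a b k₁) = l₁; rw [hswk₁, ht1]
  have ht2' : τ₁ k₂ = l₂ := by show τ₀ (Equiv.swap a b k₂) = l₂; rw [hswk₂, ht2]
  have e0 := key_pair α β F hline k₁ k₂ l₁ l₂ hk hl τ₀ ht1 ht2
  have e1 := key_pair α β F hline k₁ k₂ l₁ l₂ hk hl τ₁ ht1' ht2'
  -- signs
  have hmul : τ₁ = τ₀ * Equiv.swap a b := rfl
  have hsign1 : Equiv.Perm.sign τ₁ = - Equiv.Perm.sign τ₀ := by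
    rw [hmul, _root_.map_mul, Equiv.Perm.sign_swap hab, mul_neg_one]
  have hsign2 : ∀ τ : Equiv.Perm (Fin n),
      Equiv.Perm.sign (Equiv.swap l₁ l₂ * τ) = - Equiv.Perm.sign τ := fun τ => by
    rw [_root_.map_mul, Equiv.Perm.sign_swap hl, neg_one_mul]
  set P := F k₁ l₁ * F k₂ l₂ with hP
  set Q := F k₁ l₂ * F k₂ l₁ with hQ
  have hAB : α * P + β * Q = 0 ∧ β * P + α * Q = 0 := by
    rcases Int.units_eq_one_or (Equiv.Perm.sign τ₀) with hs | hs
    · have w0 : gw α β τ₀ = α := gw_pos hs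
      have w0' : gw α β (Equiv.swap l₁ l₂ * τ₀) = β :=
        gw_neg (by simp [hsign2, hs])
      have w1 : gw α β τ₁ = β := gw_neg (by simp [hsign1, hs])
      have w1' : gw α β (Equiv.swap l₁ l₂ * τ₁) = α :=
        gw_pos (by simp [hsign2, hsign1, hs])
      rw [w0, w0'] at e0
      rw [w1, w1'] at e1
      exact ⟨e0, e1⟩
    · have w0 : gw α β τ₀ = β := gw_neg hs
      have w0' : gw α β (Equiv.swap l₁ l₂ * τ₀) = α :=
        gw_pos (by simp [hsign2, hs])
      have w1 : gw α β τ₁ = α := gw_pos (by simp [hsign1, hs])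
      have w1' : gw α β (Equiv.swap l₁ l₂ * τ₁) = β :=
        gw_neg (by simp [hsign2, hsign1, hs])
      rw [w0, w0'] at e0
      rw [w1, w1'] at e1
      exact ⟨e1, e0⟩
  have h5 : (α - β) * (α + β) * P = 0 := by linear_combination α * hAB.1 - β * hAB.2
  have h6 : α - β ≠ 0 := sub_ne_zero.2 hαβ
  have h7 : α + β ≠ 0 := fun hcon => hαβ' (eq_neg_of_add_eq_zero_left hcon)
  exact (mul_eq_zero.1 h5).resolve_left (mul_ne_zero h6 h7)

end Aux3

/-- for `n ≥ 4` and `α ≠ ±β`, if `T` stabilizes `det^{(α,β)}`, then for every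
`(i,j)` the matrix `F = T(E_{ij})` satisfies `F_{k₁l₁}·F_{k₂l₂} = 0` whenever `k₁ ≠ k₂` and
`l₁ ≠ l₂`; consequently `F` is the zero matrix, a matrix supported on a single row, or a
matrix supported on a single column. -/
theorem image_of_matrix_unit_row_or_column {K : Type*} [Field K] [CharZero K]
    {n : ℕ} (hn : 4 ≤ n) (α β : K) (hαβ : α ≠ β) (hαβ' : α ≠ -β)
    (T : Matrix (Fin n) (Fin n) K ≃ₗ[K] Matrix (Fin n) (Fin n) K)
    (hT : ∀ A, gdet α β (T A) = gdet α β A) :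
    ∀ i j : Fin n,
      (∀ k₁ k₂ l₁ l₂ : Fin n, k₁ ≠ k₂ → l₁ ≠ l₂ →
        T (Matrix.single i j (1 : K)) k₁ l₁ *
          T (Matrix.single i j (1 : K)) k₂ l₂ = 0) ∧
      ((∃ i₀ : Fin n, ∀ k l : Fin n, k ≠ i₀ →
          T (Matrix.single i j (1 : K)) k l = 0) ∨
       (∃ j₀ : Fin n, ∀ k l : Fin n, l ≠ j₀ →
          T (Matrix.single i j (1 : K)) k l = 0)) := by
  intro i j
  set F : Matrix (Fin n) (Fin n) K := T (Matrix.single i j (1 : K)) with hF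
  have hline : ∀ (C : Matrix (Fin n) (Fin n) K) (x : K),
      gdet α β (C + x • F) = gdet α β C + x * (gdet α β (C + F) - gdet α β C) := by
    intro C x
    have hTB : T (T.symm C) = C := T.apply_symm_apply C
    have h1 : T (T.symm C + x • Matrix.single i j (1 : K)) = C + x • F := by
      rw [_root_.map_add, _root_.map_smul, hTB, hF]
    have h2 : T (T.symm C + Matrix.single i j (1 : K)) = C + F := by
      rw [_root_.map_add, hTB, hF]
    rw [← h1, hT, gdet_affine, ← hT (T.symm C), hTB, ← hT (T.symm C + Matrix.single i j 1),
      h2]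
  have P1 : ∀ k₁ k₂ l₁ l₂ : Fin n, k₁ ≠ k₂ → l₁ ≠ l₂ → F k₁ l₁ * F k₂ l₂ = 0 :=
    fun k₁ k₂ l₁ l₂ hk hl => product_zero hn α β hαβ hαβ' F hline k₁ k₂ l₁ l₂ hk hl
  refine ⟨P1, ?_⟩
  by_cases hF0 : ∀ k l, F k l = 0
  · exact Or.inl ⟨⟨0, by omega⟩, fun k l _ => hF0 k l⟩
  · push_neg at hF0
    obtain ⟨k₀, l₀, h₀⟩ := hF0
    by_cases hrow : ∃ l, l ≠ l₀ ∧ F k₀ l ≠ 0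
    · obtain ⟨l', hl', hFl'⟩ := hrow
      refine Or.inl ⟨k₀, fun k l hkk₀ => ?_⟩
      by_cases hll : l = l₀
      · subst hll
        exact (mul_eq_zero.1 (P1 k k₀ l l' hkk₀ (Ne.symm hl'))).resolve_right hFl'
      · exact (mul_eq_zero.1 (P1 k k₀ l l₀ hkk₀ hll)).resolve_right h₀
    · push_neg at hrow
      refine Or.inr ⟨l₀, fun k l hll₀ => ?_⟩
      by_cases hkk : k = k₀
      · subst hkk
        exact hrow l hll₀
      · exact (mul_eq_zero.1 (P1 k k₀ l l₀ hkk hll₀)).resolve_right h₀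
end
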